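/- Stationarity of localization dynamics: let π be a probability measure on ℝ^d, let (Ω, 𝔽, ℙ) be a probability space, and let {ν_ω}_{ω∈Ω} be a measurable family of probability measures on ℝ^d, each absolutely continuous with respect to π, such that E_{ω∼ℙ}[ν_ω(A)] = π(A) for every measurable set A. Define the Markov kernel P(A | x) := E_{ω∼ℙ}[(dν_ω/dπ)(x) · ν_ω(A)]. Then π is stationary for P: for every measurable A ⊆ ℝ^d, ∫ P(A | x) dπ(x) = π(A). -/

import Mathlib

open MeasureTheory ProbabilityTheory
open scoped ENNReal

/-- **Stationarity of localization dynamics.**  Let `μ` be a probability measure on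
`ℝ^d`, `(Ω, 𝔽, Pr)` a probability space, and `ν` a Markov kernel from `Ω` to `ℝ^d`
(a measurable family of probability measures), each `ν ω` absolutely continuous with
respect to `μ` with jointly measurable Radon–Nikodym derivative `g ω`, and such that
`E_{ω ∼ Pr}[ν ω A] = μ A` for every measurable `A`.  Then `μ` is stationary for the
Markov kernel `P(A|x) := E_{ω∼Pr}[g ω x · ν ω A]`:
`∫ P(A|x) dμ(x) = μ A` for every measurable `A`. -/
theorem localization_dynamics_stationary (d : ℕ) {Ω : Type*} [MeasurableSpace Ω]
    (Pr : Measure Ω) [IsProbabilityMeasure Pr]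
    (μ : Measure (EuclideanSpace ℝ (Fin d))) [IsProbabilityMeasure μ]
    (ν : Kernel Ω (EuclideanSpace ℝ (Fin d))) [IsMarkovKernel ν]
    (g : Ω → EuclideanSpace ℝ (Fin d) → ℝ≥0∞)
    (hg_meas : Measurable (Function.uncurry g))
    (hg_dens : ∀ ω, ν ω = μ.withDensity (g ω))
    (hmart : ∀ A : Set (EuclideanSpace ℝ (Fin d)), MeasurableSet A →
      ∫⁻ ω, ν ω A ∂Pr = μ A)
    (P : Set (EuclideanSpace ℝ (Fin d)) → EuclideanSpace ℝ (Fin d) → ℝ≥0∞)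
    (hP : ∀ A x, P A x = ∫⁻ ω, g ω x * ν ω A ∂Pr) :
    ∀ A : Set (EuclideanSpace ℝ (Fin d)), MeasurableSet A →
      ∫⁻ x, P A x ∂μ = μ A := by
  intro A hA
  have hgint : ∀ ω, ∫⁻ x, g ω x ∂μ = 1 := by
    intro ω
    have h1 : ν ω Set.univ = 1 := measure_univ
    rw [hg_dens ω, withDensity_apply _ MeasurableSet.univ] at h1
    simpa using h1
  calc ∫⁻ x, P A x ∂μ = ∫⁻ x, ∫⁻ ω, g ω x * ν ω A ∂Pr ∂μ := by
        simp only [hP]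
    _ = ∫⁻ ω, ∫⁻ x, g ω x * ν ω A ∂μ ∂Pr := by
        apply lintegral_lintegral_swap
        apply Measurable.aemeasurable
        exact (hg_meas.comp measurable_swap).mul
          ((ν.measurable_coe hA).comp measurable_snd)
    _ = ∫⁻ ω, ν ω A ∂Pr := by
        refine lintegral_congr fun ω => ?_
        have hm : Measurable (g ω) := by
          have := hg_meas.comp (measurable_prodMk_left (x := ω))
          exact this
        rw [lintegral_mul_const _ hm, hgint ω, one_mul]
    _ = μ A := hmart A hA
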